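/- Let (d_w)_{w≥1} be a real sequence, d^u > 0 with |d_w| ≤ d^u for all w ≥ 1, and let D be a positive integer with D − 1 ≤ d^u ≤ D. Let c_0 > 0, c_w := (1/w)·Σ_{r=0}^{w−1} d_{w−r}·c_r for w ≥ 1, and let c̃_0 := c_0, c̃_w := (1/w)·Σ_{r=0}^{w−1} d^u·c̃_r for w ≥ 1. Define e_w := c_w/(w+1) for all w ≥ 0 if D = 1, and, if D ≥ 2, define e_w := c_w for 0 ≤ w ≤ D − 2 and e_w := c_w / ∏_{j=1}^{D}(w + 2 − j) for w ≥ D − 1. Then |e_w| ≤ c̃_{D−1} for every integer w ≥ 0. -/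

import Mathlib

/-- With `|d_w| ≤ d^u` for `w ≥ 1`, `D` a positive integer such that `D − 1 ≤ d^u ≤ D`,
`c_0 > 0`, `c_w = (1/w)·Σ_{r=0}^{w−1} d_{w−r}·c_r`, `c̃_0 = c_0`,
`c̃_w = (1/w)·Σ_{r=0}^{w−1} d^u·c̃_r`, and `e_w` defined by
`e_w = c_w/(w+1)` (all `w`) if `D = 1`, while if `D ≥ 2` then `e_w = c_w` for
`w ≤ D − 2` and `e_w = c_w / ∏_{j=1}^{D}(w + 2 − j)` for `w ≥ D − 1`:
we have `|e_w| ≤ c̃_{D−1}` for every `w ≥ 0`. -/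
theorem abs_e_le_ct_Dsub1
    (d : ℕ → ℝ) (du : ℝ) (hdu : 0 < du) (hdbd : ∀ w : ℕ, 1 ≤ w → |d w| ≤ du)
    (D : ℕ) (hD : 1 ≤ D) (hD1 : (D : ℝ) - 1 ≤ du) (hD2 : du ≤ (D : ℝ))
    (c0 : ℝ) (hc0 : 0 < c0)
    (c ct : ℕ → ℝ) (hcz : c 0 = c0) (hctz : ct 0 = c0)
    (hc : ∀ w : ℕ, 1 ≤ w → c w = (1 / (w : ℝ)) * ∑ r ∈ Finset.range w, d (w - r) * c r)
    (hct : ∀ w : ℕ, 1 ≤ w → ct w = (1 / (w : ℝ)) * ∑ r ∈ Finset.range w, du * ct r)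
    (e : ℕ → ℝ)
    (he1 : D = 1 → ∀ w : ℕ, e w = c w / ((w : ℝ) + 1))
    (he2 : 2 ≤ D → ∀ w : ℕ, w ≤ D - 2 → e w = c w)
    (he3 : 2 ≤ D → ∀ w : ℕ, D - 1 ≤ w →
      e w = c w / ∏ j ∈ Finset.Icc 1 D, ((w : ℝ) + 2 - (j : ℝ))) :
    ∀ w : ℕ, |e w| ≤ ct (D - 1) := by
  -- positivity of ct
  have hctpos : ∀ w, 0 < ct w := by
    intro w
    induction w using Nat.strong_induction_on with
    | _ w ih =>
      rcases Nat.eq_zero_or_pos w with h | h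
      · subst h; rw [hctz]; exact hc0
      · rw [hct w h]
        have hw : (0:ℝ) < (w:ℝ) := by exact_mod_cast h
        apply mul_pos (one_div_pos.mpr hw)
        apply Finset.sum_pos
        · intro r hr; exact mul_pos hdu (ih r (Finset.mem_range.mp hr))
        · exact Finset.nonempty_range_iff.mpr h.ne'
  -- one-step recursion for ct
  have hstep : ∀ w : ℕ, ct (w+1) = (((w:ℝ)+du)/((w:ℝ)+1)) * ct w := by
    intro w
    have h1 := hct (w+1) (Nat.le_add_left 1 w)
    rw [Finset.sum_range_succ] at h1
    rcases Nat.eq_zero_or_pos w with h | h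
    · subst h
      simp only [Finset.range_zero, Finset.sum_empty, zero_add, Nat.cast_one,
        Nat.cast_zero] at h1
      rw [h1]; ring
    · have h2 := hct w h
      have hw : (w:ℝ) ≠ 0 := Nat.cast_ne_zero.mpr h.ne'
      have hS : ∑ r ∈ Finset.range w, du * ct r = (w:ℝ) * ct w := by
        rw [h2]; field_simp
      rw [hS] at h1
      rw [h1]
      have hw1 : (w:ℝ)+1 ≠ 0 := by positivity
      push_cast
      field_simp
  -- |c| ≤ ct
  have habs : ∀ w, |c w| ≤ ct w := by
    intro w
    induction w using Nat.strong_induction_on with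
    | _ w ih =>
      rcases Nat.eq_zero_or_pos w with h | h
      · subst h; rw [hcz, hctz, abs_of_pos hc0]
      · rw [hc w h, hct w h]
        have hw : (0:ℝ) < (w:ℝ) := by exact_mod_cast h
        rw [abs_mul, abs_of_pos (one_div_pos.mpr hw)]
        apply mul_le_mul_of_nonneg_left _ (le_of_lt (one_div_pos.mpr hw))
        calc |∑ r ∈ Finset.range w, d (w-r) * c r|
            ≤ ∑ r ∈ Finset.range w, |d (w-r) * c r| := Finset.abs_sum_le_sum_abs _ _
          _ ≤ ∑ r ∈ Finset.range w, du * ct r := by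
              apply Finset.sum_le_sum
              intro r hr
              rw [abs_mul]
              have hr' := Finset.mem_range.mp hr
              have h1 : |d (w-r)| ≤ du := hdbd _ (by omega)
              exact mul_le_mul h1 (ih r hr') (abs_nonneg _) (le_of_lt hdu)
  intro w
  by_cases hDone : D = 1
  · -- case D = 1
    subst hDone
    simp only [Nat.cast_one] at hD2
    have hdec : ∀ k, ct (k+1) ≤ ct k := by
      intro k
      rw [hstep k]
      have hk : (0:ℝ) < (k:ℝ)+1 := by positivity
      have h1 : ((k:ℝ)+du)/((k:ℝ)+1) ≤ 1 := by
        rw [div_le_one hk]; linarith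
      nlinarith [hctpos k, (hctpos k).le]
    have hle0 : ∀ k, ct k ≤ ct 0 := by
      intro k
      induction k with
      | zero => exact le_rfl
      | succ n ih => exact le_trans (hdec n) ih
    rw [he1 rfl w]
    have hw1 : (1:ℝ) ≤ (w:ℝ)+1 := by
      have : (0:ℝ) ≤ (w:ℝ) := Nat.cast_nonneg w
      linarith
    rw [abs_div, abs_of_pos (by positivity : (0:ℝ) < (w:ℝ)+1)]
    calc |c w| / ((w:ℝ)+1) ≤ |c w| := div_le_self (abs_nonneg _) hw1
      _ ≤ ct w := habs w
      _ ≤ ct 0 := hle0 w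
      _ = ct (1-1) := rfl
  · -- case D ≥ 2
    have hD2' : 2 ≤ D := by omega
    have hDcast : (2:ℝ) ≤ (D:ℝ) := by exact_mod_cast hD2'
    have hdu1 : (1:ℝ) ≤ du := by linarith
    have hinc : ∀ k, ct k ≤ ct (k+1) := by
      intro k
      rw [hstep k]
      have hk : (0:ℝ) < (k:ℝ)+1 := by positivity
      have h1 : (1:ℝ) ≤ ((k:ℝ)+du)/((k:ℝ)+1) := by
        rw [le_div_iff₀ hk]; linarith
      nlinarith [hctpos k]
    have hmono : Monotone ct := monotone_nat_of_le_succ hinc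
    set P : ℕ → ℝ := fun n => ∏ j ∈ Finset.Icc 1 D, ((n:ℝ)+2-(j:ℝ)) with hPdef
    have Pr : ∀ n : ℕ, P n = ∏ i ∈ Finset.range D, ((n:ℝ)+1-(i:ℝ)) := by
      intro n
      show (∏ j ∈ Finset.Icc 1 D, ((n:ℝ)+2-(j:ℝ))) = _
      rw [← Finset.Ico_add_one_right_eq_Icc, Finset.prod_Ico_eq_prod_range]
      rw [Nat.add_sub_cancel]
      apply Finset.prod_congr rfl
      intro i _
      push_cast
      ring
    have hPpos : ∀ n : ℕ, D - 1 ≤ n → 0 < P n := by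
      intro n hn
      rw [Pr]
      apply Finset.prod_pos
      intro i hi
      have hi' : i < D := Finset.mem_range.mp hi
      have : i ≤ n := by omega
      have : (i:ℝ) ≤ (n:ℝ) := by exact_mod_cast this
      linarith
    have hPone : ∀ n : ℕ, D - 1 ≤ n → 1 ≤ P n := by
      intro n hn
      rw [Pr]
      calc (1:ℝ) = ∏ _i ∈ Finset.range D, (1:ℝ) := by simp
        _ ≤ ∏ i ∈ Finset.range D, ((n:ℝ)+1-(i:ℝ)) := by
            apply Finset.prod_le_prod (fun i _ => zero_le_one)
            intro i hi
            have hi' : i < D := Finset.mem_range.mp hi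
            have h2 : i ≤ n := by omega
            have : (i:ℝ) ≤ (n:ℝ) := by exact_mod_cast h2
            linarith
    have hPrec : ∀ n : ℕ, P (n+1) * ((n:ℝ)+2-(D:ℝ)) = P n * ((n:ℝ)+2) := by
      intro n
      rw [Pr, Pr]
      have h1 : ∏ i ∈ Finset.range (D+1), ((n:ℝ)+2-(i:ℝ))
          = (∏ i ∈ Finset.range D, ((n:ℝ)+2-(i:ℝ))) * ((n:ℝ)+2-(D:ℝ)) :=
        Finset.prod_range_succ _ _
      have h2 : ∏ i ∈ Finset.range (D+1), ((n:ℝ)+2-(i:ℝ))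
          = (∏ i ∈ Finset.range D, ((n:ℝ)+2-((i:ℝ)+1))) * ((n:ℝ)+2-(0:ℝ)) := by
        have := Finset.prod_range_succ' (fun i : ℕ => (n:ℝ)+2-(i:ℝ)) D
        simpa using this
      have h3 : (∏ i ∈ Finset.range D, (((n:ℕ):ℝ)+1+1-(i:ℝ)))
          = ∏ i ∈ Finset.range D, ((n:ℝ)+2-(i:ℝ)) := by
        apply Finset.prod_congr rfl; intro i _; ring
      have h4 : (∏ i ∈ Finset.range D, ((n:ℝ)+1-(i:ℝ)))
          = ∏ i ∈ Finset.range D, ((n:ℝ)+2-((i:ℝ)+1)) := by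
        apply Finset.prod_congr rfl; intro i _; ring
      push_cast
      rw [h3, ← h1, h4]
      rw [h2]
      ring
    have hmain : ∀ n, D - 1 ≤ n → ct n ≤ ct (D-1) * P n := by
      intro n hn
      induction n, hn using Nat.le_induction with
      | base => nlinarith [hPone (D-1) le_rfl, hctpos (D-1)]
      | succ n hn ih =>
        rw [hstep n]
        have hPn := hPpos n hn
        have hPn1 := hPpos (n+1) (le_trans hn (Nat.le_succ n))
        have hrec := hPrec n
        have hctn := hctpos n
        have hctD := hctpos (D-1)
        have hDn : (D:ℝ) ≤ (n:ℝ)+1 := by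
          have : D ≤ n+1 := by omega
          exact_mod_cast this
        have hpos2 : (0:ℝ) < (n:ℝ)+2-(D:ℝ) := by linarith
        have hk : (0:ℝ) < (n:ℝ)+1 := by positivity
        have hineq : ((n:ℝ)+du)*((n:ℝ)+2-(D:ℝ)) ≤ ((n:ℝ)+1)*((n:ℝ)+2) := by
          nlinarith
        have h1 : ((n:ℝ)+du)/((n:ℝ)+1) * ct n ≤ ((n:ℝ)+du)/((n:ℝ)+1) * (ct (D-1) * P n) := by
          apply mul_le_mul_of_nonneg_left ih
          positivity
        have e1 : ct (D-1) * P (n+1) * ((n:ℝ)+1) * ((n:ℝ)+2-(D:ℝ))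
            = ct (D-1) * (P n * ((n:ℝ)+2)) * ((n:ℝ)+1) := by
          linear_combination (ct (D-1) * ((n:ℝ)+1)) * hrec
        have key : ((n:ℝ)+du) * (ct (D-1) * P n) * ((n:ℝ)+2-(D:ℝ))
            ≤ ct (D-1) * P (n+1) * ((n:ℝ)+1) * ((n:ℝ)+2-(D:ℝ)) := by
          rw [e1]
          nlinarith [mul_le_mul_of_nonneg_right hineq (mul_pos hctD hPn).le]
        have h2 : ((n:ℝ)+du) * (ct (D-1) * P n) ≤ ct (D-1) * P (n+1) * ((n:ℝ)+1) :=
          le_of_mul_le_mul_right (by linarith [key]) hpos2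
        calc ((n:ℝ)+du)/((n:ℝ)+1) * ct n
            ≤ ((n:ℝ)+du)/((n:ℝ)+1) * (ct (D-1) * P n) := h1
          _ ≤ ct (D-1) * P (n+1) := by
              rw [div_mul_eq_mul_div, div_le_iff₀ hk]
              linarith [h2]
    by_cases hw : D - 1 ≤ w
    · rw [he3 hD2' w hw]
      have hPw := hPpos w hw
      rw [show (∏ j ∈ Finset.Icc 1 D, ((w:ℝ)+2-(j:ℝ))) = P w from rfl]
      rw [abs_div, abs_of_pos hPw, div_le_iff₀ hPw]
      exact le_trans (habs w) (hmain w hw)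
    · have hw' : w ≤ D - 2 := by omega
      rw [he2 hD2' w hw']
      calc |c w| ≤ ct w := habs w
        _ ≤ ct (D-1) := hmono (by omega)
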